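/- Modus ponens holds for SIBV: if A⊸B is provable in SIBV and A is provable in SIBV, then B is provable in SIBV. -/

import Mathlib

/-- IBV formulas: A ::= a | 1 | A⊗A | A⊸A | A◁A. -/
inductive IBVF : Type
  | atom : ℕ → IBVF
  | one : IBVF
  | tens : IBVF → IBVF → IBVF
  | limp : IBVF → IBVF → IBVF
  | seq : IBVF → IBVF → IBVF

open IBVF

/-- The inference rules of the deep inference system IBV, rewriting the premise
    to the conclusion.  The Boolean index is the polarity of the context where
    the rule may be applied: `true` = positive (∘-rules), `false` = negative
    (•-rules); rules with a universally quantified polarity apply in both. -/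
inductive IBVRule : Bool → IBVF → IBVF → Prop
  | ai_down (a : ℕ) : IBVRule true one (limp (atom a) (atom a))
  | u_down_seqL (A : IBVF) : IBVRule true A (seq one A)
  | u_down_seqR (A : IBVF) : IBVRule true A (seq A one)
  | ref_pos (A B : IBVF) : IBVRule true (tens A B) (seq A B)
  | ref_neg (A B : IBVF) : IBVRule false (seq A B) (tens A B)
  | sL_pos (A B C : IBVF) : IBVRule true (tens A (limp B C)) (limp (limp A B) C)
  | sR_pos (A B C : IBVF) : IBVRule true (tens (limp A B) C) (limp A (tens B C))
  | sL_neg (A B C : IBVF) : IBVRule false (limp (limp A B) C) (tens A (limp B C))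
  | sR_neg (A B C : IBVF) : IBVRule false (limp A (tens B C)) (tens (limp A B) C)
  | sqL_pos (A B C : IBVF) : IBVRule true (seq (limp A B) C) (limp A (seq B C))
  | sqR_pos (A B C : IBVF) : IBVRule true (seq B (limp A C)) (limp A (seq B C))
  | sqL_neg (A B C : IBVF) : IBVRule false (seq (tens A B) C) (tens A (seq B C))
  | sqR_neg (A B C : IBVF) : IBVRule false (seq B (tens A C)) (tens A (seq B C))
  | q_down_pos (A B C D : IBVF) :
      IBVRule true (seq (limp A B) (limp C D)) (limp (seq A C) (seq B D))
  | q_down_neg (A B C D : IBVF) :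
      IBVRule false (seq (tens A B) (tens C D)) (tens (seq A C) (seq B D))
  | com_tens (p : Bool) (A B : IBVF) : IBVRule p (tens A B) (tens B A)
  | asso_tens (p : Bool) (A B C : IBVF) :
      IBVRule p (tens (tens A B) C) (tens A (tens B C))
  | assoL_seq (p : Bool) (A B C : IBVF) :
      IBVRule p (seq (seq A B) C) (seq A (seq B C))
  | assoR_seq (p : Bool) (A B C : IBVF) :
      IBVRule p (seq A (seq B C)) (seq (seq A B) C)
  | u_down_tens (p : Bool) (A : IBVF) : IBVRule p A (tens one A)
  | u_down_limp (p : Bool) (A : IBVF) : IBVRule p A (limp one A)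
  | cur (p : Bool) (A B C : IBVF) :
      IBVRule p (limp (tens A B) C) (limp A (limp B C))
  | ruc (p : Bool) (A B C : IBVF) :
      IBVRule p (limp A (limp B C)) (limp (tens A B) C)

/-- The up-rules added to IBV to form the symmetric system SIBV. -/
inductive UpRule : Bool → IBVF → IBVF → Prop
  | ai_up (a : ℕ) : UpRule false (limp (atom a) (atom a)) one
  | u_up_seqL (A : IBVF) : UpRule false (seq one A) A
  | u_up_seqR (A : IBVF) : UpRule false (seq A one) A
  | u_up_tens (p : Bool) (A : IBVF) : UpRule p (tens one A) A
  | u_up_limp (p : Bool) (A : IBVF) : UpRule p (limp one A) A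
  | q_up_pos (A B C D : IBVF) :
      UpRule true (tens (seq A C) (seq B D)) (seq (tens A B) (tens C D))
  | q_up_neg (A B C D : IBVF) :
      UpRule false (limp (seq A C) (seq B D)) (seq (limp A B) (limp C D))

/-- The rules of the symmetric system SIBV: the IBV rules plus the up-rules. -/
def SIBVRule (p : Bool) (A B : IBVF) : Prop := IBVRule p A B ∨ UpRule p A B

/-- One deep rewrite step, for a given rule system `R`.  `Step R p X Y` means
    that `X` rewrites to `Y` by applying a rule of `R` at some position whose
    polarity (relative to the ambient polarity `p`) matches the rule's polarity
    annotation; polarity flips when descending into the left of a ⊸. -/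
inductive Step (R : Bool → IBVF → IBVF → Prop) : Bool → IBVF → IBVF → Prop
  | rule {p : Bool} {A B : IBVF} : R p A B → Step R p A B
  | tensL {p : Bool} {A A' B : IBVF} :
      Step R p A A' → Step R p (tens A B) (tens A' B)
  | tensR {p : Bool} {A B B' : IBVF} :
      Step R p B B' → Step R p (tens A B) (tens A B')
  | seqL {p : Bool} {A A' B : IBVF} :
      Step R p A A' → Step R p (seq A B) (seq A' B)
  | seqR {p : Bool} {A B B' : IBVF} :
      Step R p B B' → Step R p (seq A B) (seq A B')
  | limpL {p : Bool} {A A' B : IBVF} :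
      Step R (!p) A A' → Step R p (limp A B) (limp A' B)
  | limpR {p : Bool} {A B B' : IBVF} :
      Step R p B B' → Step R p (limp A B) (limp A B')

/-- A derivation of polarity `p` (`true` = positive, `false` = negative) in the
    system `R` from premise `X` to conclusion `Y`: a finite sequence of deep
    rewrite steps. -/
def Deriv (R : Bool → IBVF → IBVF → Prop) (p : Bool) : IBVF → IBVF → Prop :=
  Relation.ReflTransGen (Step R p)

/-- A formula is provable in IBV if there is a positive derivation from 1. -/
def IBVProvable (A : IBVF) : Prop := Deriv IBVRule true one A

/-- A formula is provable in SIBV if there is a positive derivation from 1. -/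
def SIBVProvable (A : IBVF) : Prop := Deriv SIBVRule true one A

namespace SIBVAux

open Relation

/-- Lift a derivation into the left of a tensor. -/
lemma deriv_tensL {R : Bool → IBVF → IBVF → Prop} {p : Bool} {A A' : IBVF} (B : IBVF)
    (h : Deriv R p A A') : Deriv R p (tens A B) (tens A' B) :=
  ReflTransGen.lift (fun X => tens X B) (fun _ _ hs => Step.tensL hs) _ _ h

lemma deriv_tensR {R : Bool → IBVF → IBVF → Prop} {p : Bool} (A : IBVF) {B B' : IBVF}
    (h : Deriv R p B B') : Deriv R p (tens A B) (tens A B') :=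
  ReflTransGen.lift (fun X => tens A X) (fun _ _ hs => Step.tensR hs) _ _ h

lemma deriv_seqL {R : Bool → IBVF → IBVF → Prop} {p : Bool} {A A' : IBVF} (B : IBVF)
    (h : Deriv R p A A') : Deriv R p (seq A B) (seq A' B) :=
  ReflTransGen.lift (fun X => seq X B) (fun _ _ hs => Step.seqL hs) _ _ h

lemma deriv_seqR {R : Bool → IBVF → IBVF → Prop} {p : Bool} (A : IBVF) {B B' : IBVF}
    (h : Deriv R p B B') : Deriv R p (seq A B) (seq A B') :=
  ReflTransGen.lift (fun X => seq A X) (fun _ _ hs => Step.seqR hs) _ _ h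

lemma deriv_limpL {R : Bool → IBVF → IBVF → Prop} {p : Bool} {A A' : IBVF} (B : IBVF)
    (h : Deriv R (!p) A A') : Deriv R p (limp A B) (limp A' B) :=
  ReflTransGen.lift (fun X => limp X B) (fun _ _ hs => Step.limpL hs) _ _ h

lemma deriv_limpR {R : Bool → IBVF → IBVF → Prop} {p : Bool} (A : IBVF) {B B' : IBVF}
    (h : Deriv R p B B') : Deriv R p (limp A B) (limp A B') :=
  ReflTransGen.lift (fun X => limp A X) (fun _ _ hs => Step.limpR hs) _ _ h

/-- A single step as a derivation. -/
lemma one_step {p : Bool} {A B : IBVF} (h : Step SIBVRule p A B) :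
    Deriv SIBVRule p A B := ReflTransGen.single h

lemma ibv {p : Bool} {A B : IBVF} (h : IBVRule p A B) : Deriv SIBVRule p A B :=
  one_step (Step.rule (Or.inl h))

lemma up {p : Bool} {A B : IBVF} (h : UpRule p A B) : Deriv SIBVRule p A B :=
  one_step (Step.rule (Or.inr h))

/-- Reversal of the associativity of ⊗, derivable via commutativity. -/
lemma asso_tens_rev (p : Bool) (A B C : IBVF) :
    Deriv SIBVRule p (tens A (tens B C)) (tens (tens A B) C) :=
  ReflTransGen.trans (ibv (IBVRule.com_tens p _ _)) <|
  ReflTransGen.trans (ibv (IBVRule.asso_tens p _ _ _)) <|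
  ReflTransGen.trans (ibv (IBVRule.com_tens p _ _)) <|
  ReflTransGen.trans (ibv (IBVRule.asso_tens p _ _ _)) <|
  ibv (IBVRule.com_tens p _ _)

/-- Every SIBV step can be reversed at the opposite polarity. -/
lemma step_rev {p : Bool} {X Y : IBVF} (h : Step SIBVRule p X Y) :
    Deriv SIBVRule (!p) Y X := by
  induction h with
  | @rule p A B r =>
    rcases r with r | r
    · cases r with
      | ai_down a => exact up (UpRule.ai_up a)
      | u_down_seqL A => exact up (UpRule.u_up_seqL A)
      | u_down_seqR A => exact up (UpRule.u_up_seqR A)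
      | ref_pos A B => exact ibv (IBVRule.ref_neg A B)
      | ref_neg A B => exact ibv (IBVRule.ref_pos A B)
      | sL_pos A B C => exact ibv (IBVRule.sL_neg A B C)
      | sR_pos A B C => exact ibv (IBVRule.sR_neg A B C)
      | sL_neg A B C => exact ibv (IBVRule.sL_pos A B C)
      | sR_neg A B C => exact ibv (IBVRule.sR_pos A B C)
      | sqL_pos A B C =>
        -- reverse at `false`: A⊸(B◁C) ⟶ (A⊸B)◁C
        refine ReflTransGen.trans
          (deriv_limpL (p := false) _ (ibv (IBVRule.u_down_seqR A))) ?_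
        refine ReflTransGen.trans (up (UpRule.q_up_neg A B one C)) ?_
        exact deriv_seqR _ (up (UpRule.u_up_limp false C))
      | sqR_pos A B C =>
        -- reverse at `false`: A⊸(B◁C) ⟶ B◁(A⊸C)
        refine ReflTransGen.trans
          (deriv_limpL (p := false) _ (ibv (IBVRule.u_down_seqL A))) ?_
        refine ReflTransGen.trans (up (UpRule.q_up_neg one B A C)) ?_
        exact deriv_seqL _ (up (UpRule.u_up_limp false B))
      | sqL_neg A B C =>
        -- reverse at `true`: A⊗(B◁C) ⟶ (A⊗B)◁C
        refine ReflTransGen.trans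
          (deriv_tensL (p := true) _ (ibv (IBVRule.u_down_seqR A))) ?_
        refine ReflTransGen.trans (up (UpRule.q_up_pos A B one C)) ?_
        exact deriv_seqR _ (up (UpRule.u_up_tens true C))
      | sqR_neg A B C =>
        -- reverse at `true`: A⊗(B◁C) ⟶ B◁(A⊗C)
        refine ReflTransGen.trans
          (deriv_tensL (p := true) _ (ibv (IBVRule.u_down_seqL A))) ?_
        refine ReflTransGen.trans (up (UpRule.q_up_pos one B A C)) ?_
        exact deriv_seqL _ (up (UpRule.u_up_tens true B))
      | q_down_pos A B C D => exact up (UpRule.q_up_neg A B C D)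
      | q_down_neg A B C D => exact up (UpRule.q_up_pos A B C D)
      | com_tens p A B => exact ibv (IBVRule.com_tens (!p) B A)
      | asso_tens p A B C => exact asso_tens_rev (!p) A B C
      | assoL_seq p A B C => exact ibv (IBVRule.assoR_seq (!p) A B C)
      | assoR_seq p A B C => exact ibv (IBVRule.assoL_seq (!p) A B C)
      | u_down_tens p A => exact up (UpRule.u_up_tens (!p) A)
      | u_down_limp p A => exact up (UpRule.u_up_limp (!p) A)
      | cur p A B C => exact ibv (IBVRule.ruc (!p) A B C)
      | ruc p A B C => exact ibv (IBVRule.cur (!p) A B C)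
    · cases r with
      | ai_up a => exact ibv (IBVRule.ai_down a)
      | u_up_seqL A => exact ibv (IBVRule.u_down_seqL _)
      | u_up_seqR A => exact ibv (IBVRule.u_down_seqR _)
      | u_up_tens p A => exact ibv (IBVRule.u_down_tens (!p) _)
      | u_up_limp p A => exact ibv (IBVRule.u_down_limp (!p) _)
      | q_up_pos A B C D => exact ibv (IBVRule.q_down_neg A B C D)
      | q_up_neg A B C D => exact ibv (IBVRule.q_down_pos A B C D)
  | tensL _ ih => exact deriv_tensL _ ih
  | tensR _ ih => exact deriv_tensR _ ih
  | seqL _ ih => exact deriv_seqL _ ih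
  | seqR _ ih => exact deriv_seqR _ ih
  | @limpL p A A' B _ ih =>
    exact deriv_limpL (p := !p) B (by simpa using ih)
  | limpR _ ih => exact deriv_limpR _ ih

/-- Every SIBV derivation can be reversed at the opposite polarity. -/
lemma deriv_rev {p : Bool} {X Y : IBVF} (h : Deriv SIBVRule p X Y) :
    Deriv SIBVRule (!p) Y X := by
  induction h with
  | refl => exact ReflTransGen.refl
  | tail _ hstep ih => exact ReflTransGen.trans (step_rev hstep) ih

end SIBVAux

/-- Modus ponens for SIBV: if A⊸B and A are provable in SIBV, so is B. -/
theorem SIBV.modus_ponens {A B : IBVF}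
    (h₁ : SIBVProvable (limp A B)) (h₂ : SIBVProvable A) : SIBVProvable B := by
  have hrev : Deriv SIBVRule false A one := by
    simpa using SIBVAux.deriv_rev h₂
  have h3 : Deriv SIBVRule true (limp A B) (limp one B) :=
    SIBVAux.deriv_limpL (p := true) B hrev
  have h4 : Deriv SIBVRule true (limp one B) B :=
    SIBVAux.up (UpRule.u_up_limp true B)
  exact Relation.ReflTransGen.trans h₁ (Relation.ReflTransGen.trans h3 h4)
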